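/- Let W₁,…,W_ℓ be real d × d matrices each satisfying ‖Wⱼ·v‖ ≥ τ·‖v‖ for all v ∈ ℝ^d (smallest singular value at least τ > 0), let X be a real d × n matrix and Y a real d × n matrix. Set W = W_ℓ·W_{ℓ−1}···W₁ and E = (W·X − Y)·Xᵀ. Then Σ_{j=1}^{ℓ} ‖W_{j+1}ᵀ···W_ℓᵀ · E · W₁ᵀ···W_{j−1}ᵀ‖_F² ≥ ℓ·τ^{2ℓ−2}·‖E‖_F², where for j = ℓ the left factor is E itself and for j = 1 the right factor is E itself. (The j-th summand is the Frobenius norm of the partial derivative of f(W₁,…,W_ℓ) = ½‖W_ℓ···W₁X − Y‖_F² with respect to Wⱼ.) -/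

import Mathlib

open Matrix

/-- The squared Frobenius norm of a real matrix: `‖A‖_F² = Σᵢⱼ Aᵢⱼ²`. -/
def frobSq {m n : Type*} [Fintype m] [Fintype n] (A : Matrix m n ℝ) : ℝ :=
  ∑ i, ∑ j, (A i j) ^ 2

/-- Prefix product: `prefixProd W k = W_{k-1} ⬝ W_{k-2} ⬝ ⋯ ⬝ W_0` (and `1` for `k = 0`). -/
def prefixProd {d l : ℕ} (W : Fin l → Matrix (Fin d) (Fin d) ℝ) : ℕ → Matrix (Fin d) (Fin d) ℝ
  | 0 => 1
  | k + 1 => (if h : k < l then W ⟨k, h⟩ else 1) * prefixProd W k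

/-- Suffix product of the last `m` factors:
`suffixProd W m = W_{l-1} ⬝ W_{l-2} ⬝ ⋯ ⬝ W_{l-m}` (and `1` for `m = 0`). -/
def suffixProd {d l : ℕ} (W : Fin l → Matrix (Fin d) (Fin d) ℝ) : ℕ → Matrix (Fin d) (Fin d) ℝ
  | 0 => 1
  | m + 1 => suffixProd W m * (if h : l - 1 - m < l then W ⟨l - 1 - m, h⟩ else 1)

section Aux

variable {d k : ℕ}

lemma toEuc_mul (A B : Matrix (Fin d) (Fin d) ℝ) (v : EuclideanSpace ℝ (Fin d)) :
    Matrix.toEuclideanLin (A * B) v = Matrix.toEuclideanLin A (Matrix.toEuclideanLin B v) := by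
  simp [Matrix.toEuclideanLin_apply, Matrix.mulVec_mulVec]

lemma toEuc_one (v : EuclideanSpace ℝ (Fin d)) :
    Matrix.toEuclideanLin (1 : Matrix (Fin d) (Fin d) ℝ) v = v := by
  simp [Matrix.toEuclideanLin_apply]

lemma frobSq_nonneg (A : Matrix (Fin d) (Fin k) ℝ) : 0 ≤ frobSq A := by
  apply Finset.sum_nonneg; intro i _; apply Finset.sum_nonneg; intro j _; positivity

lemma frobSq_transpose (A : Matrix (Fin d) (Fin k) ℝ) : frobSq Aᵀ = frobSq A := by
  unfold frobSq
  rw [Finset.sum_comm]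
  rfl

lemma euclidean_norm_sq (v : EuclideanSpace ℝ (Fin d)) : ‖v‖ ^ 2 = ∑ i, (v i) ^ 2 := by
  rw [EuclideanSpace.norm_eq, Real.sq_sqrt (by positivity)]
  simp [sq_abs]

/-- Left multiplication by a matrix with smallest singular value ≥ τ. -/
lemma frob_left {τ : ℝ} (hτ : 0 ≤ τ) (M : Matrix (Fin d) (Fin d) ℝ)
    (hM : ∀ v : EuclideanSpace ℝ (Fin d), τ * ‖v‖ ≤ ‖Matrix.toEuclideanLin M v‖)
    (A : Matrix (Fin d) (Fin k) ℝ) : τ ^ 2 * frobSq A ≤ frobSq (M * A) := by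
  unfold frobSq
  rw [Finset.sum_comm, Finset.sum_comm (γ := Fin d), Finset.mul_sum]
  apply Finset.sum_le_sum
  intro j _
  set v : EuclideanSpace ℝ (Fin d) := (WithLp.equiv 2 (Fin d → ℝ)).symm (fun i => A i j) with hv
  have h1 : ∑ i, (A i j) ^ 2 = ‖v‖ ^ 2 := by
    rw [euclidean_norm_sq]; rfl
  have h2 : ∑ i, ((M * A) i j) ^ 2 = ‖Matrix.toEuclideanLin M v‖ ^ 2 := by
    rw [euclidean_norm_sq]
    apply Finset.sum_congr rfl
    intro i _
    congr 1
  rw [h1, h2, ← mul_pow]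
  have := hM v
  have hnn : 0 ≤ τ * ‖v‖ := by positivity
  nlinarith [norm_nonneg (Matrix.toEuclideanLin M v)]

/-- Smallest singular value of the transpose. -/
lemma sigma_transpose {τ : ℝ} (hτ : 0 < τ) (M : Matrix (Fin d) (Fin d) ℝ)
    (hM : ∀ v : EuclideanSpace ℝ (Fin d), τ * ‖v‖ ≤ ‖Matrix.toEuclideanLin M v‖) :
    ∀ w : EuclideanSpace ℝ (Fin d), τ * ‖w‖ ≤ ‖Matrix.toEuclideanLin Mᵀ w‖ := by
  set f : EuclideanSpace ℝ (Fin d) →ₗ[ℝ] EuclideanSpace ℝ (Fin d) := Matrix.toEuclideanLin M with hf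
  have hinj : Function.Injective f := by
    intro a b hab
    have h := hM (a - b)
    rw [map_sub, hab, sub_self, norm_zero] at h
    have : ‖a - b‖ ≤ 0 := by nlinarith [norm_nonneg (a - b)]
    have : a - b = 0 := by
      rw [← norm_le_zero_iff]; exact this
    exact sub_eq_zero.mp this
  have hsurj : Function.Surjective f := LinearMap.injective_iff_surjective.mp hinj
  have hadj : (Matrix.toEuclideanLin Mᵀ : EuclideanSpace ℝ (Fin d) →ₗ[ℝ] EuclideanSpace ℝ (Fin d))
      = LinearMap.adjoint f := by
    rw [hf, ← Matrix.toEuclideanLin_conjTranspose_eq_adjoint,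
      Matrix.conjTranspose_eq_transpose_of_trivial]
  intro w
  obtain ⟨u, hu⟩ := hsurj w
  have key : (inner ℝ (Matrix.toEuclideanLin Mᵀ w) u : ℝ) = ‖w‖ ^ 2 := by
    rw [hadj, LinearMap.adjoint_inner_left, hu, real_inner_self_eq_norm_sq]
  have h1 : ‖w‖ ^ 2 ≤ ‖Matrix.toEuclideanLin Mᵀ w‖ * ‖u‖ := by
    rw [← key]; exact real_inner_le_norm _ _
  have h2 : τ * ‖u‖ ≤ ‖w‖ := by rw [← hu]; exact hM u
  rcases eq_or_lt_of_le (norm_nonneg w) with h0 | h0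
  · rw [← h0, mul_zero]; exact norm_nonneg _
  · have hN : 0 ≤ ‖Matrix.toEuclideanLin Mᵀ w‖ := norm_nonneg _
    have hu0 : 0 ≤ ‖u‖ := norm_nonneg _
    nlinarith

/-- Right multiplication by the transpose. -/
lemma frob_right {τ : ℝ} (hτ : 0 ≤ τ) (M : Matrix (Fin d) (Fin d) ℝ)
    (hM : ∀ v : EuclideanSpace ℝ (Fin d), τ * ‖v‖ ≤ ‖Matrix.toEuclideanLin M v‖)
    (A : Matrix (Fin k) (Fin d) ℝ) : τ ^ 2 * frobSq A ≤ frobSq (A * Mᵀ) := by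
  have h : (A * Mᵀ)ᵀ = M * Aᵀ := by
    rw [Matrix.transpose_mul, Matrix.transpose_transpose]
  calc τ ^ 2 * frobSq A = τ ^ 2 * frobSq Aᵀ := by rw [frobSq_transpose]
    _ ≤ frobSq (M * Aᵀ) := frob_left hτ M hM Aᵀ
    _ = frobSq (A * Mᵀ) := by rw [← h, frobSq_transpose]

lemma prefix_sigma {l : ℕ} {τ : ℝ} (hτ : 0 < τ) (W : Fin l → Matrix (Fin d) (Fin d) ℝ)
    (hW : ∀ (j : Fin l) (v : EuclideanSpace ℝ (Fin d)),
      τ * ‖v‖ ≤ ‖Matrix.toEuclideanLin (W j) v‖) :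
    ∀ k, k ≤ l → ∀ v : EuclideanSpace ℝ (Fin d),
      τ ^ k * ‖v‖ ≤ ‖Matrix.toEuclideanLin (prefixProd W k) v‖ := by
  intro k
  induction k with
  | zero => intro _ v; simp [prefixProd, toEuc_one]
  | succ k ih =>
    intro hk v
    have hkl : k < l := hk
    have hP := ih (Nat.le_of_succ_le hk) v
    show τ ^ (k+1) * ‖v‖ ≤ ‖Matrix.toEuclideanLin (prefixProd W (k+1)) v‖
    have hdef : prefixProd W (k + 1) = W ⟨k, hkl⟩ * prefixProd W k := by
      simp [prefixProd, hkl]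
    rw [hdef, toEuc_mul]
    calc τ ^ (k+1) * ‖v‖ = τ * (τ ^ k * ‖v‖) := by ring
      _ ≤ τ * ‖Matrix.toEuclideanLin (prefixProd W k) v‖ :=
          mul_le_mul_of_nonneg_left hP hτ.le
      _ ≤ _ := hW _ _

lemma suffix_sigma {l : ℕ} {τ : ℝ} (hτ : 0 < τ) (W : Fin l → Matrix (Fin d) (Fin d) ℝ)
    (hW : ∀ (j : Fin l) (v : EuclideanSpace ℝ (Fin d)),
      τ * ‖v‖ ≤ ‖Matrix.toEuclideanLin (W j) v‖) :
    ∀ m, m ≤ l → ∀ v : EuclideanSpace ℝ (Fin d),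
      τ ^ m * ‖v‖ ≤ ‖Matrix.toEuclideanLin (suffixProd W m) v‖ := by
  intro m
  induction m with
  | zero => intro _ v; simp [suffixProd, toEuc_one]
  | succ m ih =>
    intro hm v
    have hml : l - 1 - m < l := by omega
    have hdef : suffixProd W (m + 1) = suffixProd W m * W ⟨l - 1 - m, hml⟩ := by
      simp [suffixProd, hml]
    rw [hdef, toEuc_mul]
    have hw := hW ⟨l - 1 - m, hml⟩ v
    have hS := ih (Nat.le_of_succ_le hm) (Matrix.toEuclideanLin (W ⟨l - 1 - m, hml⟩) v)
    calc τ ^ (m+1) * ‖v‖ = τ ^ m * (τ * ‖v‖) := by ring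
      _ ≤ τ ^ m * ‖Matrix.toEuclideanLin (W ⟨l - 1 - m, hml⟩) v‖ :=
          mul_le_mul_of_nonneg_left hw (by positivity)
      _ ≤ _ := hS

end Aux

theorem deep_linear_gradient_bound (l d n : ℕ) (hl : 1 ≤ l) (τ : ℝ) (hτ : 0 < τ)
    (W : Fin l → Matrix (Fin d) (Fin d) ℝ)
    (hW : ∀ (j : Fin l) (v : EuclideanSpace ℝ (Fin d)),
      τ * ‖v‖ ≤ ‖Matrix.toEuclideanLin (W j) v‖)
    (X Y : Matrix (Fin d) (Fin n) ℝ)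
    (E : Matrix (Fin d) (Fin d) ℝ)
    (hE : E = (prefixProd W l * X - Y) * Xᵀ) :
    (l : ℝ) * τ ^ (2 * l - 2) * frobSq E ≤
      ∑ j : Fin l,
        frobSq ((suffixProd W (l - ((j : ℕ) + 1)))ᵀ * E * (prefixProd W (j : ℕ))ᵀ) := by
  have key : ∀ j : Fin l, τ ^ (2 * l - 2) * frobSq E ≤
      frobSq ((suffixProd W (l - ((j : ℕ) + 1)))ᵀ * E * (prefixProd W (j : ℕ))ᵀ) := by
    intro j
    set m : ℕ := l - ((j : ℕ) + 1) with hm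
    have hjl : (j : ℕ) < l := j.isLt
    have hS := suffix_sigma hτ W hW m (by omega)
    have hP := prefix_sigma hτ W hW (j : ℕ) (by omega)
    have hSt := sigma_transpose (pow_pos hτ m) (suffixProd W m) hS
    have step1 : (τ ^ m) ^ 2 * frobSq (E * (prefixProd W (j : ℕ))ᵀ) ≤
        frobSq ((suffixProd W m)ᵀ * (E * (prefixProd W (j : ℕ))ᵀ)) :=
      frob_left (by positivity) _ hSt _
    have step2 : (τ ^ (j : ℕ)) ^ 2 * frobSq E ≤ frobSq (E * (prefixProd W (j : ℕ))ᵀ) :=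
      frob_right (by positivity) _ hP E
    have hassoc : (suffixProd W m)ᵀ * E * (prefixProd W (j : ℕ))ᵀ =
        (suffixProd W m)ᵀ * (E * (prefixProd W (j : ℕ))ᵀ) := by rw [mul_assoc]
    rw [hassoc]
    calc τ ^ (2 * l - 2) * frobSq E = (τ ^ m) ^ 2 * ((τ ^ (j : ℕ)) ^ 2 * frobSq E) := by
          rw [← pow_mul, ← pow_mul, ← mul_assoc, ← pow_add]
          congr 2
          omega
      _ ≤ (τ ^ m) ^ 2 * frobSq (E * (prefixProd W (j : ℕ))ᵀ) :=
          mul_le_mul_of_nonneg_left step2 (by positivity)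
      _ ≤ _ := step1
  calc (l : ℝ) * τ ^ (2 * l - 2) * frobSq E
      = ∑ _j : Fin l, τ ^ (2 * l - 2) * frobSq E := by
        rw [Finset.sum_const, Finset.card_univ, Fintype.card_fin, nsmul_eq_mul, mul_assoc]
    _ ≤ _ := Finset.sum_le_sum fun j _ => key j
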